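/- For the 4×4 matrix A = [[u,0,0,0],[v,u,0,0],[w,2v,u,0],[z,3w,3v,u]] with v ≠ 0, one has (A − u·I)^3 ≠ 0 and (A − u·I)^4 = 0; hence the Jordan canonical form of A consists of a single Jordan block of size 4 with eigenvalue u. -/

import Mathlib

open Matrix

theorem stmt_12 (u v w z : ℝ) (hv : v ≠ 0) (A : Matrix (Fin 4) (Fin 4) ℝ)
    (hA : A = !![u, 0, 0, 0; v, u, 0, 0; w, 2*v, u, 0; z, 3*w, 3*v, u]) :
    (A - u • (1 : Matrix (Fin 4) (Fin 4) ℝ))^3 ≠ 0 ∧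
    (A - u • (1 : Matrix (Fin 4) (Fin 4) ℝ))^4 = 0 ∧
    ∃ P : Matrix (Fin 4) (Fin 4) ℝ, IsUnit P.det ∧
      P⁻¹ * A * P = !![u, 1, 0, 0; 0, u, 1, 0; 0, 0, u, 1; 0, 0, 0, u] := by
  subst hA
  refine ⟨?_, ?_, ?_⟩
  · intro h
    have h30 := congrFun (congrFun h 3) 0
    simp [pow_succ, Matrix.mul_apply, Fin.sum_univ_four, Matrix.sub_apply,
      Matrix.smul_apply, Matrix.one_apply] at h30
    exact hv (by nlinarith [sq_nonneg v])
  · ext i j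
    fin_cases i <;> fin_cases j <;>
      simp [pow_succ, Matrix.mul_apply, Fin.sum_univ_four, Matrix.sub_apply,
        Matrix.smul_apply, Matrix.one_apply] <;> ring
  · refine ⟨!![0,0,0,1; 0,0,v,0; 0,2*v^2,w,0; 6*v^3,6*v*w,z,0], ?_, ?_⟩
    · have hd : (!![0,0,0,1; 0,0,v,0; 0,2*v^2,w,0; 6*v^3,6*v*w,z,0] :
          Matrix (Fin 4) (Fin 4) ℝ).det = 12 * v^6 := by
        norm_num [Matrix.det_succ_row_zero, Fin.sum_univ_succ, Fin.isValue, Matrix.cons_val_succ, Matrix.cons_val_zero, show ((2:Fin 3).castSucc : Fin 4) = 2 from rfl]; simp only [Matrix.cons_val_two, Matrix.head_cons, Matrix.tail_cons, Matrix.vecHead, Matrix.cons_val_zero]; ring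
      rw [hd]
      exact (isUnit_iff_ne_zero).2 (by positivity)
    · have hd : IsUnit (!![0,0,0,1; 0,0,v,0; 0,2*v^2,w,0; 6*v^3,6*v*w,z,0] :
          Matrix (Fin 4) (Fin 4) ℝ).det := by
        have hd : (!![0,0,0,1; 0,0,v,0; 0,2*v^2,w,0; 6*v^3,6*v*w,z,0] :
            Matrix (Fin 4) (Fin 4) ℝ).det = 12 * v^6 := by
          norm_num [Matrix.det_succ_row_zero, Fin.sum_univ_succ, Fin.isValue, Matrix.cons_val_succ, Matrix.cons_val_zero, show ((2:Fin 3).castSucc : Fin 4) = 2 from rfl]; simp only [Matrix.cons_val_two, Matrix.head_cons, Matrix.tail_cons, Matrix.vecHead, Matrix.cons_val_zero]; ring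
        rw [hd]
        exact (isUnit_iff_ne_zero).2 (by positivity)
      have key : (!![u, 0, 0, 0; v, u, 0, 0; w, 2*v, u, 0; z, 3*w, 3*v, u] :
          Matrix (Fin 4) (Fin 4) ℝ) * !![0,0,0,1; 0,0,v,0; 0,2*v^2,w,0; 6*v^3,6*v*w,z,0]
          = !![0,0,0,1; 0,0,v,0; 0,2*v^2,w,0; 6*v^3,6*v*w,z,0] *
            !![u, 1, 0, 0; 0, u, 1, 0; 0, 0, u, 1; 0, 0, 0, u] := by
        ext i j
        fin_cases i <;> fin_cases j <;>
          simp [Matrix.mul_apply, Fin.sum_univ_four] <;> ring_nf <;>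
          simp [Matrix.vecHead, Matrix.vecTail] <;> ring
      rw [mul_assoc, key, ← mul_assoc, Matrix.nonsing_inv_mul _ hd, one_mul]
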